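/- Let E be a connected Hopf algebra over a field K of characteristic 0 and x ∈ P(E) a nonzero primitive element. Then the unique algebra homomorphism σ : K[X] → E with σ(X) = x is an injective Hopf algebra homomorphism; in particular the Hopf subalgebra of E generated by x is isomorphic to the polynomial Hopf algebra K[X] with X primitive. -/

import Mathlib

open TensorProduct Polynomial

variable (K : Type*) [Field K]

/-- The comultiplication of the polynomial Hopf algebra `K[X]` with `X`
primitive: the algebra map determined by `Δ(X) = 1 ⊗ X + X ⊗ 1`. -/
noncomputable def polyComul : K[X] →ₗ[K] K[X] ⊗[K] K[X] :=
  (Polynomial.aeval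
    ((1 : K[X]) ⊗ₜ[K] (Polynomial.X : K[X]) +
      (Polynomial.X : K[X]) ⊗ₜ[K] (1 : K[X]))).toLinearMap

/-- The counit of the polynomial Hopf algebra: evaluation at `0`. -/
noncomputable def polyCounit : K[X] →ₗ[K] K :=
  (Polynomial.aeval (0 : K)).toLinearMap

/-- A `K`-subspace `V` of a coalgebra `E` is a subcoalgebra if
`Δ(V) ⊆ V ⊗ V`. -/
def IsSubcoalgebra {E : Type*} [Ring E] [HopfAlgebra K E]
    (V : Submodule K E) : Prop :=
  ∀ v ∈ V, Coalgebra.comul (R := K) v ∈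
    LinearMap.range (TensorProduct.map V.subtype V.subtype)

/-- A Hopf algebra `E` is connected if its coradical is `K·1`, i.e. every
simple subcoalgebra of `E` equals `K·1`. -/
def IsConnectedHopf (E : Type*) [Ring E] [HopfAlgebra K E] : Prop :=
  ∀ V : Submodule K E, IsSubcoalgebra K V → V ≠ ⊥ →
    (∀ W : Submodule K E, W ≤ V → IsSubcoalgebra K W → W = ⊥ ∨ W = V) →
    V = Submodule.span K {(1 : E)}

section AuxLemmas

variable {K : Type*} [Field K]

theorem exists_dual_family {E : Type*} [AddCommGroup E] [Module K E]
    {m : ℕ} {v : Fin m → E} (hv : LinearIndependent K v) :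
    ∃ φ : Fin m → (E →ₗ[K] K), ∀ i j, φ i (v j) = if j = i then 1 else 0 := by
  have H : ∀ i : Fin m, ∃ φ : E →ₗ[K] K, ∀ j, φ (v j) = if j = i then 1 else 0 := by
    intro i
    obtain ⟨g, hg⟩ := LinearMap.exists_extend
      ((Finsupp.lapply i).comp (hv.repr : _ →ₗ[K] (Fin m →₀ K)))
    refine ⟨g, fun j => ?_⟩
    have hmem : v j ∈ Submodule.span K (Set.range v) :=
      Submodule.subset_span ⟨j, rfl⟩
    have h2 := LinearMap.congr_fun hg ⟨v j, hmem⟩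
    simp only [LinearMap.comp_apply, Submodule.subtype_apply] at h2
    rw [h2, hv.repr_eq_single j ⟨v j, hmem⟩ rfl]
    simp [Finsupp.single_apply]
  choose φ hφ using H
  exact ⟨φ, fun i j => hφ i j⟩

variable {E : Type*} [Ring E] [HopfAlgebra K E]

theorem counit_prim {x : E} (hx : x ≠ 0)
    (hprim : Coalgebra.comul (R := K) x = (1 : E) ⊗ₜ[K] x + x ⊗ₜ[K] (1 : E)) :
    Coalgebra.counit (R := K) x = 0 := by
  have hone : (1:E) ≠ 0 := by
    intro h; apply hx
    calc x = x * 1 := (mul_one x).symm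
      _ = 0 := by rw [h, mul_zero]
  have h1 := Coalgebra.rTensor_counit_comul (R := K) x
  rw [hprim, map_add, LinearMap.rTensor_tmul, LinearMap.rTensor_tmul,
    Bialgebra.counit_one] at h1
  have h2 : (Coalgebra.counit (R:=K) x) ⊗ₜ[K] (1:E) = (0 : K ⊗[K] E) :=
    add_eq_left.mp h1
  have h3 := congrArg (TensorProduct.lid K E) h2
  simp only [TensorProduct.lid_tmul, map_zero] at h3
  rcases smul_eq_zero.mp h3 with h | h
  · exact h
  · exact absurd h hone

theorem comul_pow_prim {x : E}
    (hprim : Coalgebra.comul (R := K) x = (1 : E) ⊗ₜ[K] x + x ⊗ₜ[K] (1 : E))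
    (m : ℕ) :
    Coalgebra.comul (R := K) (x ^ m) =
      ∑ k ∈ Finset.range (m + 1),
        (m.choose k : K) • ((x ^ (m - k)) ⊗ₜ[K] (x ^ k) : E ⊗[K] E) := by
  have hcomm : Commute ((1:E) ⊗ₜ[K] x) (x ⊗ₜ[K] (1:E)) := by
    simp [Commute, SemiconjBy, Algebra.TensorProduct.tmul_mul_tmul]
  have h1 : Coalgebra.comul (R := K) (x ^ m) =
      ((1:E) ⊗ₜ[K] x + x ⊗ₜ[K] (1:E)) ^ m := by
    rw [← hprim, ← Bialgebra.comulAlgHom_apply K, map_pow]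
    rfl
  rw [h1, hcomm.add_pow]
  refine Finset.sum_congr rfl fun k hk => ?_
  have h2 : ((1:E) ⊗ₜ[K] x)^k * ((x ⊗ₜ[K] (1:E)))^(m-k) = (x^(m-k)) ⊗ₜ[K] (x^k) := by
    simp [Algebra.TensorProduct.tmul_pow, Algebra.TensorProduct.tmul_mul_tmul]
  rw [h2, Algebra.smul_def, map_natCast]
  exact ((Nat.cast_commute (m.choose k) (((x^(m-k)) ⊗ₜ[K] (x^k) : E ⊗[K] E))).eq).symm

theorem pow_linearIndependent [CharZero K] {x : E} (hx : x ≠ 0)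
    (hprim : Coalgebra.comul (R := K) x = (1 : E) ⊗ₜ[K] x + x ⊗ₜ[K] (1 : E))
    (n : ℕ) :
    LinearIndependent K (fun i : Fin (n + 1) => x ^ (i : ℕ)) := by
  have hone : (1:E) ≠ 0 := by
    intro h; apply hx
    calc x = x * 1 := (mul_one x).symm
      _ = 0 := by rw [h, mul_zero]
  induction n with
  | zero =>
      rw [Fintype.linearIndependent_iff]
      intro g hg i
      simp only [Fin.sum_univ_succ, Fin.sum_univ_zero, add_zero, Fin.val_zero,
        pow_zero] at hg
      have hi : i = 0 := by omega
      rcases smul_eq_zero.mp hg with h | h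
      · rwa [hi]
      · exact absurd h hone
  | succ n ih =>
      obtain ⟨φ, hφ⟩ := exists_dual_family ih
      have hφ' : ∀ (i : Fin (n+1)) (k : ℕ), k ≤ n →
          φ i (x ^ k) = if k = (i:ℕ) then 1 else 0 := by
        intro i k hk
        have h := hφ i ⟨k, Nat.lt_succ_of_le hk⟩
        simpa [Fin.ext_iff] using h
      rw [Fintype.linearIndependent_iff]
      intro c hc
      have hlast : c (Fin.last (n+1)) = 0 := by
        by_contra hcl
        set cl := c (Fin.last (n+1)) with hclv
        have hsum : (∑ i : Fin (n+1), c i.castSucc • x ^ (i:ℕ)) + cl • x^(n+1) = 0 := by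
          rw [← hc,
            Fin.sum_univ_castSucc (f := fun i : Fin (n+2) => c i • x ^ (i:ℕ))]
          simp
          rfl
        set d : Fin (n+1) → K := fun i => -(c i.castSucc / cl) with hd
        have h4 : cl • x^(n+1) = ∑ i : Fin (n+1), (-(c i.castSucc)) • x ^ (i:ℕ) := by
          have := eq_neg_of_add_eq_zero_right hsum
          rw [this, ← Finset.sum_neg_distrib]
          exact Finset.sum_congr rfl fun i _ => (neg_smul _ _).symm
        have hxn1 : x^(n+1) = ∑ i : Fin (n+1), d i • x ^ (i:ℕ) := by
          have h5 : x^(n+1) = cl⁻¹ • (cl • x^(n+1)) := by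
            rw [smul_smul, inv_mul_cancel₀ hcl, one_smul]
          rw [h5, h4, Finset.smul_sum]
          refine Finset.sum_congr rfl fun i _ => ?_
          rw [smul_smul, hd]
          congr 1
          field_simp
        rcases Nat.eq_zero_or_pos n with hn0 | hn1
        · subst hn0
          have hx1 : x = d 0 • (1:E) := by simpa using hxn1
          have h6 := congrArg (Coalgebra.counit (R := K)) hx1
          rw [counit_prim hx hprim, map_smul, Bialgebra.counit_one, smul_eq_mul,
            mul_one] at h6
          rw [hx1, ← h6, zero_smul] at hx
          exact hx rfl
        · set a : Fin (n+1) := ⟨1, by omega⟩ with ha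
          set b : Fin (n+1) := ⟨n, by omega⟩ with hb
          set Φ : E ⊗[K] E →ₗ[K] K :=
            (LinearMap.mul' K K) ∘ₗ (TensorProduct.map (φ a) (φ b)) with hΦdef
          have hΦ : ∀ s t : E, Φ (s ⊗ₜ[K] t) = φ a s * φ b t := by
            intro s t
            simp [hΦdef, LinearMap.mul'_apply]
          have hA : Φ (Coalgebra.comul (R := K) (x^(n+1))) = ((n+1 : ℕ) : K) := by
            rw [comul_pow_prim hprim (n+1), map_sum]
            rw [Finset.sum_eq_single n]
            · rw [map_smul, hΦ]
              have e1 : n + 1 - n = 1 := by omega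
              rw [e1, hφ' a 1 (by omega), hφ' b n (by omega)]
              simp [ha, hb, Nat.choose_succ_self_right]
            · intro k hk hkn
              rw [map_smul, hΦ]
              rcases Nat.lt_or_ge k (n+1) with hk1 | hk2
              · rw [hφ' b k (by omega)]
                simp [hb, hkn]
              · have hk3 : k = n + 1 := by
                  simp only [Finset.mem_range] at hk; omega
                subst hk3
                have e2 : n + 1 - (n+1) = 0 := by omega
                rw [e2, hφ' a 0 (by omega)]
                simp [ha]
            · intro h
              exact absurd (Finset.mem_range.mpr (by omega)) h
          have hB : Φ (Coalgebra.comul (R := K) (x^(n+1))) = 0 := by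
            rw [hxn1, map_sum, map_sum]
            refine Finset.sum_eq_zero fun i _ => ?_
            rw [map_smul, map_smul, comul_pow_prim hprim, map_sum]
            rw [smul_eq_zero]
            right
            refine Finset.sum_eq_zero fun k hk => ?_
            rw [map_smul, hΦ]
            have hi := i.isLt
            simp only [Finset.mem_range] at hk
            rcases eq_or_ne k n with hkn | hkn
            · have e3 : (i:ℕ) - k = 0 := by omega
              rw [e3, hφ' a 0 (by omega)]
              simp [ha]
            · rw [hφ' b k (by omega)]
              simp [hb, hkn]
          rw [hA] at hB
          exact absurd (Nat.cast_eq_zero.mp hB) (by omega)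
      intro i
      induction i using Fin.lastCases with
      | last => exact hlast
      | cast j =>
          have hc' : ∑ i : Fin (n+1), c i.castSucc • x ^ (i:ℕ) = 0 := by
            rw [Fin.sum_univ_castSucc] at hc
            simpa [hlast] using hc
          exact Fintype.linearIndependent_iff.mp ih (fun i => c i.castSucc) hc' j

end AuxLemmas

/-- If `E` is a connected Hopf algebra over a field of characteristic `0` and
`x ∈ P(E)` is a nonzero primitive, then the unique algebra map
`σ : K[X] → E` with `σ(X) = x` is an injective Hopf algebra homomorphism;
in particular the Hopf subalgebra generated by `x` is isomorphic to the
polynomial Hopf algebra `K[X]` with `X` primitive. -/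
theorem connected_hopf_primitive_gives_polynomial_subalgebra
    [CharZero K] {E : Type*} [Ring E] [HopfAlgebra K E]
    (hconn : IsConnectedHopf K E)
    (x : E) (hx : x ≠ 0)
    (hprim : Coalgebra.comul (R := K) x = (1 : E) ⊗ₜ[K] x + x ⊗ₜ[K] (1 : E)) :
    Function.Injective (Polynomial.aeval x : K[X] →ₐ[K] E) ∧
    -- `σ` is a coalgebra homomorphism:
    (Coalgebra.comul (R := K)) ∘ₗ (Polynomial.aeval x : K[X] →ₐ[K] E).toLinearMap =
      (TensorProduct.map (Polynomial.aeval x : K[X] →ₐ[K] E).toLinearMap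
        (Polynomial.aeval x : K[X] →ₐ[K] E).toLinearMap) ∘ₗ polyComul K ∧
    (Coalgebra.counit (R := K)) ∘ₗ (Polynomial.aeval x : K[X] →ₐ[K] E).toLinearMap =
      polyCounit K := by
  have hindep := pow_linearIndependent (K := K) hx hprim
  have hcounitx := counit_prim hx hprim
  refine ⟨?_, ?_, ?_⟩
  · rw [injective_iff_map_eq_zero]
    intro p hp
    by_contra hp0
    have hev : ∑ i ∈ Finset.range (p.natDegree + 1), p.coeff i • x ^ i = 0 := by
      rw [← Polynomial.aeval_eq_sum_range, hp]
    have hz := Fintype.linearIndependent_iff.mp (hindep p.natDegree)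
      (fun i : Fin (p.natDegree + 1) => p.coeff i) ?_
    · have h1 := hz ⟨p.natDegree, by omega⟩
      simp only at h1
      rw [← Polynomial.leadingCoeff] at h1
      exact hp0 (Polynomial.leadingCoeff_eq_zero.mp h1)
    · rw [Fin.sum_univ_eq_sum_range (fun i => p.coeff i • x ^ i) (p.natDegree + 1)]
      exact hev
  · have hmap : (Algebra.TensorProduct.map (Polynomial.aeval x : K[X] →ₐ[K] E)
        (Polynomial.aeval x)).toLinearMap
        = TensorProduct.map (Polynomial.aeval x : K[X] →ₐ[K] E).toLinearMap
          (Polynomial.aeval x : K[X] →ₐ[K] E).toLinearMap :=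
      TensorProduct.ext' fun a b => by simp
    have hAlg : (Bialgebra.comulAlgHom K E).comp (Polynomial.aeval x) =
        (Algebra.TensorProduct.map (Polynomial.aeval x) (Polynomial.aeval x)).comp
          (Polynomial.aeval ((1 : K[X]) ⊗ₜ[K] (Polynomial.X : K[X]) +
            (Polynomial.X : K[X]) ⊗ₜ[K] (1 : K[X]))) := by
      apply Polynomial.algHom_ext
      simp [hprim, Algebra.TensorProduct.map_tmul]
    apply LinearMap.ext; intro p
    have h2 := AlgHom.congr_fun hAlg p
    simp only [AlgHom.comp_apply, Bialgebra.comulAlgHom_apply] at h2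
    simp only [LinearMap.comp_apply, AlgHom.toLinearMap_apply, polyComul]
    rw [h2, ← hmap]
    rfl
  · have hAlg2 : (Bialgebra.counitAlgHom K E).comp (Polynomial.aeval x) =
        (Polynomial.aeval (0 : K) : K[X] →ₐ[K] K) := by
      apply Polynomial.algHom_ext
      simp [hcounitx]
    apply LinearMap.ext; intro p
    have h3 := AlgHom.congr_fun hAlg2 p
    simpa [polyCounit, Bialgebra.counitAlgHom_apply] using h3
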